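/- If C₁, C₂ ⊆ ℝ² are each homeomorphic to the unit circle, C₁ ∩ B(C₂) ≠ ∅, and C₂ ∩ B(C₁) ≠ ∅, then C₁ ∩ C₂ contains at least two points. -/
import Mathlib

open Set

/-- The plane. -/
abbrev Plane := EuclideanSpace ℝ (Fin 2)

/-- The unit circle in the plane. -/
abbrev unitCircle : Set Plane := Metric.sphere (0 : Plane) 1

/-- The unit circle minus a point is preconnected (as a set in the subtype),
via stereographic projection. -/
lemma sphere_compl_pt_preconn (p : ↥unitCircle) :
    IsPreconnected ({p}ᶜ : Set ↥unitCircle) := by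
  have hv : ‖(p : Plane)‖ = 1 := by
    have := p.2
    simp only [Metric.mem_sphere, dist_zero_right] at this
    exact this
  let e := stereographic hv
  have h1 : IsPreconnected (e.target) := by
    rw [stereographic_target]
    exact (convex_univ : Convex ℝ (univ : Set ↥(ℝ ∙ (p:Plane))ᗮ)).isPreconnected
  have h2 : e.symm '' e.target = e.source := e.symm_image_target_eq_source
  have h3 : IsPreconnected (e.source) := by
    rw [← h2]
    exact h1.image _ e.continuousOn_invFun
  have h4 : e.source = ({p}ᶜ : Set ↥unitCircle) := by
    rw [stereographic_source]
  rwa [h4] at h3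

/-- A set homeomorphic to the unit circle is compact. -/
lemma compact_of_homeo_circle {C : Set Plane} (h : Nonempty (↥unitCircle ≃ₜ ↥C)) :
    IsCompact C := by
  obtain ⟨e⟩ := h
  have : CompactSpace ↥unitCircle := isCompact_iff_compactSpace.mp (isCompact_sphere 0 1)
  have : CompactSpace ↥C := e.compactSpace
  exact isCompact_iff_compactSpace.mpr this

/-- A set homeomorphic to the unit circle, minus at most one point, is preconnected. -/
lemma preconn_diff_of_homeo_circle {C : Set Plane} (h : Nonempty (↥unitCircle ≃ₜ ↥C))
    {S : Set Plane} (hS : S.Subsingleton) : IsPreconnected (C \ S) := by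
  obtain ⟨e⟩ := h
  have hrank2 : 1 < Module.rank ℝ Plane := by
    have hfr : Module.finrank ℝ Plane = 2 := finrank_euclideanSpace_fin
    have := Module.finrank_eq_rank ℝ Plane
    rw [hfr] at this
    rw [← this]
    exact_mod_cast (by norm_num : (1:ℕ) < 2)
  have hC : IsPreconnected C := by
    have h1 : IsPreconnected (univ : Set ↥unitCircle) := by
      have : PreconnectedSpace ↥unitCircle :=
        Subtype.preconnectedSpace ((isConnected_sphere hrank2 0 zero_le_one).isPreconnected)
      exact isPreconnected_univ
    have h2 := h1.image (fun x => (e x : Plane)) (Continuous.continuousOn (by continuity))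
    have himg : (fun x : ↥unitCircle => (e x : Plane)) '' univ = C := by
      ext y
      constructor
      · rintro ⟨x, -, rfl⟩; exact (e x).2
      · intro hy
        exact ⟨e.symm ⟨y, hy⟩, mem_univ _, by simp⟩
    rwa [himg] at h2
  rcases hS.eq_empty_or_singleton with rfl | ⟨a, rfl⟩
  · simpa using hC
  · by_cases ha : a ∈ C
    · -- C \ {a} is the image of the circle minus a point
      set p : ↥unitCircle := e.symm ⟨a, ha⟩ with hp
      have h1 : IsPreconnected ({p}ᶜ : Set ↥unitCircle) := sphere_compl_pt_preconn p
      have h2 := h1.image (fun x => (e x : Plane)) (Continuous.continuousOn (by continuity))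
      have himg : (fun x : ↥unitCircle => (e x : Plane)) '' ({p}ᶜ) = C \ {a} := by
        ext y
        constructor
        · rintro ⟨x, hx, rfl⟩
          refine ⟨(e x).2, ?_⟩
          simp only [mem_singleton_iff]
          intro hya
          apply hx
          simp only [mem_singleton_iff, hp]
          have : e x = ⟨a, ha⟩ := Subtype.ext hya
          rw [← this]; simp
        · rintro ⟨hyC, hya⟩
          refine ⟨e.symm ⟨y, hyC⟩, ?_, by simp⟩
          simp only [mem_compl_iff, mem_singleton_iff, hp]
          intro hcon
          have := congrArg e hcon
          simp only [Homeomorph.apply_symm_apply] at this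
          apply hya
          simpa [mem_singleton_iff] using congrArg Subtype.val this
      rwa [himg] at h2
    · have : C \ {a} = C := by
        ext y; simp only [mem_diff, mem_singleton_iff, and_iff_left_iff_imp]
        rintro hy rfl; exact ha hy
      rwa [this]

/-- The frontier of a connected component of the complement of a closed set
is contained in that set. -/
lemma frontier_cc_subset {C : Set Plane} (hC : IsClosed C) {x : Plane} :
    frontier (connectedComponentIn Cᶜ x) ⊆ C := by
  intro y hy
  by_contra hyC
  have hopen : IsOpen (connectedComponentIn Cᶜ x) := hC.isOpen_compl.connectedComponentIn
  rw [hopen.frontier_eq] at hy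
  obtain ⟨hycl, hynot⟩ := hy
  have hyc : y ∈ Cᶜ := hyC
  have hopen' : IsOpen (connectedComponentIn Cᶜ y) := hC.isOpen_compl.connectedComponentIn
  have hymem : y ∈ connectedComponentIn Cᶜ y := mem_connectedComponentIn hyc
  obtain ⟨z, hz1, hz2⟩ := mem_closure_iff.mp hycl _ hopen' hymem
  have : connectedComponentIn Cᶜ y = connectedComponentIn Cᶜ x := by
    rw [connectedComponentIn_eq hz1, connectedComponentIn_eq hz2]
  exact hynot (this ▸ hymem)

theorem circles_intersect_in_two_points
    (C₁ C₂ : Set Plane)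
    (hC₁ : Nonempty (↥unitCircle ≃ₜ ↥C₁)) (hC₂ : Nonempty (↥unitCircle ≃ₜ ↥C₂))
    (B₁ B₂ : Set Plane)
    (hB₁comp : ∃ x ∈ C₁ᶜ, B₁ = connectedComponentIn C₁ᶜ x)
    (hB₁bd : Bornology.IsBounded B₁)
    (hB₂comp : ∃ x ∈ C₂ᶜ, B₂ = connectedComponentIn C₂ᶜ x)
    (hB₂bd : Bornology.IsBounded B₂)
    (h₁ : (C₁ ∩ B₂).Nonempty) (h₂ : (C₂ ∩ B₁).Nonempty) :
    (C₁ ∩ C₂).Nontrivial := by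
  by_contra hnt
  have hsub : (C₁ ∩ C₂).Subsingleton := not_nontrivial_iff.mp hnt
  obtain ⟨x₁, hx₁, hB₁⟩ := hB₁comp
  obtain ⟨x₂, hx₂, hB₂⟩ := hB₂comp
  obtain ⟨p₁, hp₁C, hp₁B⟩ := h₁
  obtain ⟨p₂, hp₂C, hp₂B⟩ := h₂
  have hC₁cpt := compact_of_homeo_circle hC₁
  have hC₂cpt := compact_of_homeo_circle hC₂
  have hC₁cl : IsClosed C₁ := hC₁cpt.isClosed
  have hC₂cl : IsClosed C₂ := hC₂cpt.isClosed
  have hB₁sub : B₁ ⊆ C₁ᶜ := hB₁ ▸ connectedComponentIn_subset _ _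
  have hB₂sub : B₂ ⊆ C₂ᶜ := hB₂ ▸ connectedComponentIn_subset _ _
  have hB₁open : IsOpen B₁ := hB₁ ▸ hC₁cl.isOpen_compl.connectedComponentIn
  have hB₂open : IsOpen B₂ := hB₂ ▸ hC₂cl.isOpen_compl.connectedComponentIn
  -- C₁ \ C₂ ⊆ B₂
  have key₁ : C₁ \ C₂ ⊆ B₂ := by
    have hpre : IsPreconnected (C₁ \ C₂) := by
      have : C₁ \ C₂ = C₁ \ (C₁ ∩ C₂) := by
        ext z; simp only [mem_diff, mem_inter_iff]; tauto
      rw [this]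
      exact preconn_diff_of_homeo_circle hC₁ hsub
    have hp₁mem : p₁ ∈ C₁ \ C₂ := ⟨hp₁C, hB₂sub hp₁B⟩
    have hsubF : C₁ \ C₂ ⊆ C₂ᶜ := fun z hz => hz.2
    have h5 : C₁ \ C₂ ⊆ connectedComponentIn C₂ᶜ p₁ :=
      hpre.subset_connectedComponentIn hp₁mem hsubF
    have h6 : connectedComponentIn C₂ᶜ p₁ = B₂ := by
      rw [hB₂]
      exact (connectedComponentIn_eq (hB₂ ▸ hp₁B)).symm
    rwa [h6] at h5
  have key₂ : C₂ \ C₁ ⊆ B₁ := by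
    have hpre : IsPreconnected (C₂ \ C₁) := by
      have : C₂ \ C₁ = C₂ \ (C₁ ∩ C₂) := by
        ext z; simp only [mem_diff, mem_inter_iff]; tauto
      rw [this]
      exact preconn_diff_of_homeo_circle hC₂ hsub
    have hp₂mem : p₂ ∈ C₂ \ C₁ := ⟨hp₂C, hB₁sub hp₂B⟩
    have hsubF : C₂ \ C₁ ⊆ C₁ᶜ := fun z hz => hz.2
    have h5 : C₂ \ C₁ ⊆ connectedComponentIn C₁ᶜ p₂ :=
      hpre.subset_connectedComponentIn hp₂mem hsubF
    have h6 : connectedComponentIn C₁ᶜ p₂ = B₁ := by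
      rw [hB₁]
      exact (connectedComponentIn_eq (hB₁ ▸ hp₂B)).symm
    rwa [h6] at h5
  -- the open bounded set V = B₁ ∪ B₂
  set V : Set Plane := B₁ ∪ B₂ with hV
  have hVopen : IsOpen V := hB₁open.union hB₂open
  have hVbd : Bornology.IsBounded V := hB₁bd.union hB₂bd
  have hVne : V.Nonempty := ⟨p₁, Or.inr hp₁B⟩
  have hfr₁ : frontier B₁ ⊆ C₁ := hB₁ ▸ frontier_cc_subset hC₁cl
  have hfr₂ : frontier B₂ ⊆ C₂ := hB₂ ▸ frontier_cc_subset hC₂cl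
  rcases (C₁ ∩ C₂).eq_empty_or_nonempty with hemp | ⟨a, ha⟩
  · -- C₁ and C₂ disjoint: V is clopen, nonempty, bounded — contradiction
    have hC₁V : C₁ ⊆ V := by
      intro z hz
      exact Or.inr (key₁ ⟨hz, fun hz2 => by
        have : z ∈ C₁ ∩ C₂ := ⟨hz, hz2⟩
        rw [hemp] at this; exact this⟩)
    have hC₂V : C₂ ⊆ V := by
      intro z hz
      exact Or.inl (key₂ ⟨hz, fun hz2 => by
        have : z ∈ C₁ ∩ C₂ := ⟨hz2, hz⟩
        rw [hemp] at this; exact this⟩)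
    have hfru : frontier V ⊆ frontier B₁ ∪ frontier B₂ :=
      (frontier_union_subset B₁ B₂).trans
        (union_subset_union inter_subset_left inter_subset_right)
    have hfrV : frontier V ⊆ V :=
      hfru.trans (union_subset (hfr₁.trans hC₁V) (hfr₂.trans hC₂V))
    have hclopen : IsClopen V := by
      constructor
      · have hcl : closure V ⊆ V := by
          intro z hz
          by_cases hzV : z ∈ V
          · exact hzV
          · exact hfrV (by rw [hVopen.frontier_eq]; exact ⟨hz, hzV⟩)
        exact closure_subset_iff_isClosed.mp hcl
      · exact hVopen
    rcases isClopen_iff.mp hclopen with h | h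
    · exact hVne.ne_empty h
    · exact NormedSpace.unbounded_univ ℝ Plane (h ▸ hVbd)
  · -- C₁ ∩ C₂ = {a}
    have haeq : ∀ z ∈ C₁ ∩ C₂, z = a := fun z hz => hsub hz ha
    have haV : a ∉ V := by
      rintro (h | h)
      · exact hB₁sub h ha.1
      · exact hB₂sub h ha.2
    have hC₁V : C₁ ⊆ V ∪ {a} := by
      intro z hz
      by_cases hz2 : z ∈ C₂
      · exact Or.inr (haeq z ⟨hz, hz2⟩)
      · exact Or.inl (Or.inr (key₁ ⟨hz, hz2⟩))
    have hC₂V : C₂ ⊆ V ∪ {a} := by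
      intro z hz
      by_cases hz1 : z ∈ C₁
      · exact Or.inr (haeq z ⟨hz1, hz⟩)
      · exact Or.inl (Or.inl (key₂ ⟨hz, hz1⟩))
    have hfrV : frontier V ⊆ {a} := by
      intro z hz
      have hfru : frontier V ⊆ frontier B₁ ∪ frontier B₂ :=
        (frontier_union_subset B₁ B₂).trans
          (union_subset_union inter_subset_left inter_subset_right)
      have hz' : z ∈ C₁ ∪ C₂ := (hfru hz).imp (fun h => hfr₁ h) (fun h => hfr₂ h)
      have hznotV : z ∉ V := by
        rw [hVopen.frontier_eq] at hz; exact hz.2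
      rcases hz' with h | h
      · rcases hC₁V h with h' | h'
        · exact absurd h' hznotV
        · exact h'
      · rcases hC₂V h with h' | h'
        · exact absurd h' hznotV
        · exact h'
    -- complement of {a} is preconnected but split by V and (closure V)ᶜ
    have hrank : 1 < Module.rank ℝ Plane := by
      have hfr : Module.finrank ℝ Plane = 2 := finrank_euclideanSpace_fin
      have h := Module.finrank_eq_rank ℝ Plane
      rw [hfr] at h
      rw [← h]
      exact_mod_cast (by norm_num : (1:ℕ) < 2)
    have hconn : IsPreconnected ({a}ᶜ : Set Plane) :=
      (isConnected_compl_singleton_of_one_lt_rank hrank a).isPreconnected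
    have hclV : closure V ⊆ V ∪ {a} := by
      intro z hz
      by_cases hzV : z ∈ V
      · exact Or.inl hzV
      · exact Or.inr (hfrV (by rw [hVopen.frontier_eq]; exact ⟨hz, hzV⟩))
    -- a point outside closure V ∪ {a}
    obtain ⟨w, hw⟩ : ∃ w : Plane, w ∉ closure V ∪ {a} := by
      by_contra hcon
      push_neg at hcon
      have hbd : Bornology.IsBounded (closure V ∪ {a}) :=
        hVbd.closure.union Bornology.isBounded_singleton
      apply NormedSpace.unbounded_univ ℝ Plane
      exact hbd.subset (fun z _ => hcon z)
    have hwa : w ≠ a := fun h => hw (Or.inr h)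
    have hwV : w ∉ closure V := fun h => hw (Or.inl h)
    -- apply preconnectedness of {a}ᶜ to the open cover V, (closure V)ᶜ
    have hcover : ({a}ᶜ : Set Plane) ⊆ V ∪ (closure V)ᶜ := by
      intro z hz
      by_cases hzc : z ∈ closure V
      · rcases hclV hzc with h | h
        · exact Or.inl h
        · exact absurd h hz
      · exact Or.inr hzc
    have hp₁a : p₁ ≠ a := by
      intro h
      exact haV (h ▸ (Or.inr hp₁B : p₁ ∈ V))
    have hne₁ : (({a}ᶜ : Set Plane) ∩ V).Nonempty := ⟨p₁, hp₁a, Or.inr hp₁B⟩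
    have hne₂ : (({a}ᶜ : Set Plane) ∩ (closure V)ᶜ).Nonempty := ⟨w, hwa, hwV⟩
    obtain ⟨z, -, hz₁, hz₂⟩ :=
      hconn V (closure V)ᶜ hVopen (isClosed_closure.isOpen_compl) hcover hne₁ hne₂
    exact hz₂ (subset_closure hz₁)
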